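/- For every real x with 3 ≤ x ≤ 2π − 3, the four sums ∑_{n=1}^∞ sin(nx)/n, ∑_{n=1}^∞ sin(n)sin(nx)/n², ∑_{n=1}^∞ sin²(n)sin(nx)/n³, and ∑_{n=1}^∞ sin³(n)sin(nx)/n⁴ all equal (π − x)/2. -/

import Mathlib

open Real Filter Finset Topology

section aux
open Polynomial

lemma bern2 (y : ℝ) : (Polynomial.map (algebraMap ℚ ℝ) (Polynomial.bernoulli 2)).eval y
    = y^2 - y + 1/6 := by
  have h2 : _root_.bernoulli 2 = 1/6 := by
    rw [bernoulli_eq_bernoulli'_of_ne_one (by norm_num), bernoulli'_two]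
  simp [Polynomial.bernoulli, Finset.sum_range_succ, h2]
  ring

lemma bern3 (y : ℝ) : (Polynomial.map (algebraMap ℚ ℝ) (Polynomial.bernoulli 3)).eval y
    = y^3 - 3/2*y^2 + 1/2*y := by
  have h2 : _root_.bernoulli 2 = 1/6 := by
    rw [bernoulli_eq_bernoulli'_of_ne_one (by norm_num), bernoulli'_two]
  have h3 : _root_.bernoulli 3 = 0 := by
    rw [bernoulli_eq_bernoulli'_of_ne_one (by norm_num), bernoulli'_three]
  simp [Polynomial.bernoulli, Finset.sum_range_succ, h2, h3]
  ring

lemma bern4 (y : ℝ) : (Polynomial.map (algebraMap ℚ ℝ) (Polynomial.bernoulli 4)).eval y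
    = y^4 - 2*y^3 + y^2 - 1/30 := by
  have h2 : _root_.bernoulli 2 = 1/6 := by
    rw [bernoulli_eq_bernoulli'_of_ne_one (by norm_num), bernoulli'_two]
  have h3 : _root_.bernoulli 3 = 0 := by
    rw [bernoulli_eq_bernoulli'_of_ne_one (by norm_num), bernoulli'_three]
  have h4 : _root_.bernoulli 4 = -1/30 := by
    rw [bernoulli_eq_bernoulli'_of_ne_one (by norm_num), bernoulli'_four]
  simp [Polynomial.bernoulli, Finset.sum_range_succ, h2, h3, h4, Nat.choose]
  ring


lemma hasSum_cos2 {θ : ℝ} (h0 : 0 ≤ θ) (h1 : θ ≤ 2*π) :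
    HasSum (fun n : ℕ => Real.cos (n*θ) / (n:ℝ)^2) (π^2/6 - π*θ/2 + θ^2/4) := by
  have hπ := Real.pi_pos
  have hx : θ/(2*π) ∈ Set.Icc (0:ℝ) 1 :=
    ⟨by positivity, by rw [div_le_one (by positivity)]; exact h1⟩
  have H := hasSum_one_div_nat_pow_mul_cos (k := 1) one_ne_zero hx
  rw [bern2] at H
  convert H using 1
  · funext n
    have e : 2*π*(n:ℝ)*(θ/(2*π)) = n*θ := by field_simp
    rw [e]; ring
  · have e2 : ((2*1).factorial : ℝ) = 2 := by norm_num [Nat.factorial]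
    rw [e2]
    field_simp
    ring

lemma hasSum_sin3 {θ : ℝ} (h0 : 0 ≤ θ) (h1 : θ ≤ 2*π) :
    HasSum (fun n : ℕ => Real.sin (n*θ) / (n:ℝ)^3) (θ^3/12 - π*θ^2/4 + π^2*θ/6) := by
  have hπ := Real.pi_pos
  have hx : θ/(2*π) ∈ Set.Icc (0:ℝ) 1 :=
    ⟨by positivity, by rw [div_le_one (by positivity)]; exact h1⟩
  have H := hasSum_one_div_nat_pow_mul_sin (k := 1) one_ne_zero hx
  rw [bern3] at H
  convert H using 1
  · funext n
    have e : 2*π*(n:ℝ)*(θ/(2*π)) = n*θ := by field_simp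
    rw [e]; ring
  · have e2 : ((2*1+1).factorial : ℝ) = 6 := by norm_num [Nat.factorial]
    rw [e2]
    field_simp
    ring

lemma hasSum_cos4 {θ : ℝ} (h0 : 0 ≤ θ) (h1 : θ ≤ 2*π) :
    HasSum (fun n : ℕ => Real.cos (n*θ) / (n:ℝ)^4)
      (-θ^4/48 + π*θ^3/12 - π^2*θ^2/12 + π^4/90) := by
  have hπ := Real.pi_pos
  have hx : θ/(2*π) ∈ Set.Icc (0:ℝ) 1 :=
    ⟨by positivity, by rw [div_le_one (by positivity)]; exact h1⟩
  have H := hasSum_one_div_nat_pow_mul_cos (k := 2) two_ne_zero hx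
  rw [bern4] at H
  convert H using 1
  · funext n
    have e : 2*π*(n:ℝ)*(θ/(2*π)) = n*θ := by field_simp
    rw [e]; ring
  · have e2 : ((2*2).factorial : ℝ) = 24 := by norm_num [Nat.factorial]
    rw [e2]
    field_simp
    ring

open Filter Topology in
lemma tendsto_Icc_of_range {f : ℕ → ℝ} {a : ℝ} (hf : f 0 = 0)
    (h : Tendsto (fun N : ℕ => ∑ n ∈ Finset.range N, f n) atTop (𝓝 a)) :
    Tendsto (fun N : ℕ => ∑ n ∈ Finset.Icc 1 N, f n) atTop (𝓝 a) := by
  have h2 : ∀ N : ℕ, ∑ n ∈ Finset.Icc 1 N, f n = ∑ n ∈ Finset.range (N+1), f n := by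
    intro N
    rw [Finset.range_eq_Ico, Finset.sum_eq_sum_Ico_succ_bot (Nat.succ_pos N), hf, zero_add,
      Nat.succ_eq_add_one, zero_add, Finset.Ico_add_one_right_eq_Icc]
  simp_rw [h2]
  exact h.comp (tendsto_add_atTop_nat 1)

open Filter Topology in
lemma tendsto_Icc_of_hasSum {f : ℕ → ℝ} {a : ℝ} (hf : f 0 = 0) (h : HasSum f a) :
    Tendsto (fun N : ℕ => ∑ n ∈ Finset.Icc 1 N, f n) atTop (𝓝 a) :=
  tendsto_Icc_of_range hf h.tendsto_sum_nat

section series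
variable {x : ℝ} (h3 : 3 ≤ x) (h3' : x ≤ 2*π - 3)

include h3 h3' in
lemma series2 : HasSum (fun n : ℕ => Real.sin n * Real.sin (n*x) / (n:ℝ)^2) ((π - x)/2) := by
  have hπ := Real.pi_gt_three
  have H := ((hasSum_cos2 (θ := x - 1) (by linarith) (by linarith)).sub
    (hasSum_cos2 (θ := x + 1) (by linarith) (by linarith))).div_const 2
  convert H using 1
  · rfl
  · funext n
    rw [show (n:ℝ)*(x-1) = n*x - n by ring, show (n:ℝ)*(x+1) = n*x + n by ring,
      Real.cos_sub, Real.cos_add]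
    ring
  · ring

include h3 h3' in
lemma series3 : HasSum (fun n : ℕ => Real.sin n ^ 2 * Real.sin (n*x) / (n:ℝ)^3) ((π - x)/2) := by
  have hπ := Real.pi_gt_three
  have H := ((hasSum_sin3 (θ := x) (by linarith) (by linarith)).div_const 2).sub
    (((hasSum_sin3 (θ := x + 2) (by linarith) (by linarith)).add
      (hasSum_sin3 (θ := x - 2) (by linarith) (by linarith))).div_const 4)
  convert H using 1
  · rfl
  · funext n
    rw [show (n:ℝ)*(x+2) = n*x + 2*n by ring, show (n:ℝ)*(x-2) = n*x - 2*n by ring,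
      Real.sin_add, Real.sin_sub, Real.cos_two_mul, Real.cos_sq']
    ring
  · ring

include h3 h3' in
lemma series4 : HasSum (fun n : ℕ => Real.sin n ^ 3 * Real.sin (n*x) / (n:ℝ)^4) ((π - x)/2) := by
  have hπ := Real.pi_gt_three
  have H := (((hasSum_cos4 (θ := x - 1) (by linarith) (by linarith)).sub
      (hasSum_cos4 (θ := x + 1) (by linarith) (by linarith))).mul_left (3/8)).sub
    (((hasSum_cos4 (θ := x - 3) (by linarith) (by linarith)).sub
      (hasSum_cos4 (θ := x + 3) (by linarith) (by linarith))).mul_left (1/8))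
  convert H using 1
  · rfl
  · funext n
    rw [show (n:ℝ)*(x-1) = n*x - n by ring, show (n:ℝ)*(x+1) = n*x + n by ring,
      show (n:ℝ)*(x-3) = n*x - 3*n by ring, show (n:ℝ)*(x+3) = n*x + 3*n by ring,
      Real.cos_sub, Real.cos_add, Real.cos_sub, Real.cos_add, Real.sin_three_mul,
      Real.cos_three_mul]
    ring
  · ring

end series

end aux

-- bound on partial sums of sin((i+1)x)
lemma sin_sum_bound {x : ℝ} (hx : Complex.exp (x * Complex.I) ≠ 1) :
    ∀ n : ℕ, ‖∑ i ∈ range n, Real.sin ((i+1) * x)‖ ≤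
      2 / ‖Complex.exp (x * Complex.I) - 1‖ := by
  intro n
  set w := Complex.exp (x * Complex.I) with hw
  have habs : ‖w‖ = 1 := Complex.norm_exp_ofReal_mul_I x
  have him : (∑ i ∈ range n, w ^ (i+1)).im = ∑ i ∈ range n, Real.sin ((i+1) * x) := by
    rw [Complex.im_sum]
    refine Finset.sum_congr rfl fun i _ => ?_
    rw [hw, ← Complex.exp_nat_mul]
    rw [show (i+1 : ℕ) * ((x:ℂ) * Complex.I) = (((i+1 : ℕ) * x : ℝ) : ℂ) * Complex.I by push_cast; ring]
    rw [Complex.exp_ofReal_mul_I_im]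
    push_cast
    ring_nf
  rw [← him]
  calc ‖(∑ i ∈ range n, w ^ (i+1)).im‖ ≤ ‖∑ i ∈ range n, w ^ (i+1)‖ :=
        Complex.abs_im_le_norm _
    _ ≤ 2 / ‖w - 1‖ := by
        have : ∑ i ∈ range n, w ^ (i+1) = w * ((w ^ n - 1)/(w - 1)) := by
          rw [← geom_sum_eq hx n, Finset.mul_sum]
          exact Finset.sum_congr rfl fun i _ => pow_succ' w i
        rw [this, norm_mul, habs, one_mul, norm_div]
        gcongr
        calc ‖w ^ n - 1‖ ≤ ‖w ^ n‖ + ‖(1:ℂ)‖ :=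
              norm_sub_le (w^n) 1
          _ ≤ 2 := by rw [norm_pow, habs, one_pow, norm_one]; norm_num

lemma series1 {x : ℝ} (h3 : 3 ≤ x) (h3' : x ≤ 2*π - 3) :
    Tendsto (fun N : ℕ => ∑ n ∈ range N, Real.sin (n*x) / n) atTop (𝓝 ((π - x)/2)) := by
  have hπ := Real.pi_gt_three
  have hx0 : 0 < x := by linarith
  have hx2 : x < 2*π := by linarith
  -- exp(x I) ≠ 1
  have hw1 : Complex.exp (x * Complex.I) ≠ 1 := by
    intro h
    rw [Complex.exp_eq_one_iff] at h
    obtain ⟨n, hn⟩ := h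
    have him := congrArg Complex.im hn
    simp at him
    -- him : x = n * (2*π) presumably
    rcases le_or_gt n 0 with h | h
    · have : (n:ℝ) * (2*π) ≤ 0 := by
        apply mul_nonpos_of_nonpos_of_nonneg
        · exact_mod_cast h
        · positivity
      nlinarith [him]
    · have : (1:ℝ) ≤ n := by exact_mod_cast h
      nlinarith [him]
  -- Dirichlet test
  have hfa : Antitone (fun n : ℕ => 1/((n:ℝ)+1)) := by
    intro a b hab
    have : (a:ℝ) ≤ b := Nat.cast_le.mpr hab
    exact one_div_le_one_div_of_le (by positivity) (by linarith)
  have hf0 : Tendsto (fun n : ℕ => 1/((n:ℝ)+1)) atTop (𝓝 0) :=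
    tendsto_one_div_add_atTop_nhds_zero_nat
  have cauchy : CauchySeq (fun N : ℕ =>
      ∑ i ∈ range N, (1/((i:ℝ)+1)) • Real.sin ((i+1)*x)) :=
    hfa.cauchySeq_series_mul_of_tendsto_zero_of_bounded hf0 (sin_sum_bound hw1)
  obtain ⟨l, hl⟩ := cauchySeq_tendsto_of_complete cauchy
  -- relate to our sums
  have hshift : ∀ N : ℕ, ∑ n ∈ range (N+1), Real.sin (n*x) / n
      = ∑ i ∈ range N, (1/((i:ℝ)+1)) • Real.sin ((i+1)*x) := by
    intro N
    rw [Finset.sum_range_succ']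
    simp only [Nat.cast_zero, zero_mul, Real.sin_zero, zero_div, add_zero, smul_eq_mul]
    refine Finset.sum_congr rfl fun i _ => ?_
    push_cast
    ring
  have hg : Tendsto (fun N : ℕ => ∑ n ∈ range N, Real.sin (n*x) / n) atTop (𝓝 l) := by
    rw [← tendsto_add_atTop_iff_nat 1]
    simp_rw [hshift]
    exact hl
  -- Abel limit
  have abel := Real.tendsto_tsum_powerSeries_nhdsWithin_lt hg
  set F : ℝ → ℝ := fun y => (-(Complex.log (1 - y * Complex.exp (x * Complex.I)))).im with hF
  have habel : Tendsto F (𝓝[<] (1:ℝ)) (𝓝 l) := by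
    apply abel.congr'
    rw [eventuallyEq_nhdsWithin_iff, Metric.eventually_nhds_iff]
    refine ⟨1, zero_lt_one, fun y hy1 hy2 => ?_⟩
    rw [Real.dist_eq, abs_sub_lt_iff] at hy1
    rw [Set.mem_Iio] at hy2
    have hyn : ‖(y:ℂ) * Complex.exp (x * Complex.I)‖ < 1 := by
      rw [norm_mul, Complex.norm_exp_ofReal_mul_I,
        mul_one, Complex.norm_real, Real.norm_eq_abs]
      rw [abs_lt]; constructor <;> linarith
    have hs := Complex.hasSum_taylorSeries_neg_log hyn
    have hs2 := hs.mapL Complex.imCLM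
    have heq : ∀ n : ℕ, Complex.imCLM (((y:ℂ) * Complex.exp (x * Complex.I)) ^ n / n)
        = Real.sin (n*x) / n * y ^ n := by
      intro n
      have e1 : ((y:ℂ) * Complex.exp (x * Complex.I)) ^ n / n
          = ((y^n / n : ℝ) : ℂ) * Complex.exp (((n*x : ℝ):ℂ) * Complex.I) := by
        rw [mul_pow, ← Complex.exp_nat_mul,
          show (n:ℂ) * ((x:ℂ) * Complex.I) = (((n*x:ℝ)):ℂ) * Complex.I by push_cast; ring]
        push_cast
        ring
      rw [Complex.imCLM_apply, e1, Complex.im_ofReal_mul, Complex.exp_ofReal_mul_I_im]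
      ring
    have hs3 : HasSum (fun n : ℕ => Real.sin (n*x) / n * y ^ n) (F y) := by
      simpa only [heq, Complex.imCLM_apply] using hs2
    exact hs3.tsum_eq
  -- trig facts
  have hsin2 : 0 < Real.sin (x/2) :=
    Real.sin_pos_of_pos_of_lt_pi (by linarith) (by linarith)
  have hcosx : Real.cos x = 1 - 2 * Real.sin (x/2)^2 := by
    have h1 := Real.cos_two_mul (x/2)
    rw [show 2*(x/2) = x by ring] at h1
    have h2 := Real.sin_sq_add_cos_sq (x/2)
    nlinarith
  have hsinx : Real.sin x = 2 * Real.sin (x/2) * Real.cos (x/2) := by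
    have h1 := Real.sin_two_mul (x/2)
    rw [show 2*(x/2) = x by ring] at h1
    linarith
  -- continuity of F at 1
  have hmem : (1 : ℂ) - (1:ℝ) * Complex.exp (x * Complex.I) ∈ Complex.slitPlane := by
    rw [Complex.mem_slitPlane_iff]
    left
    simp [Complex.sub_re, Complex.exp_ofReal_mul_I_re]
    nlinarith
  have hinner : ContinuousAt (fun y : ℝ => 1 - (y:ℂ) * Complex.exp (x * Complex.I)) 1 := by
    fun_prop
  have hcont : Tendsto F (𝓝 (1:ℝ)) (𝓝 (F 1)) := by
    apply ContinuousAt.tendsto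
    have hlog : ContinuousAt Complex.log ((1:ℂ) - ((1:ℝ):ℂ) * Complex.exp (x * Complex.I)) :=
      continuousAt_clog hmem
    have h2 : ContinuousAt (fun y : ℝ => Complex.log (1 - (y:ℂ) * Complex.exp (x * Complex.I))) 1 :=
      ContinuousAt.comp (g := Complex.log)
        (f := fun y : ℝ => 1 - (y:ℂ) * Complex.exp (x * Complex.I)) hlog hinner
    exact Complex.continuous_im.continuousAt.comp h2.neg
  have hl1 : l = F 1 := tendsto_nhds_unique habel (hcont.mono_left nhdsWithin_le_nhds)
  -- compute F 1
  have hθc : Real.cos ((x-π)/2) = Real.sin (x/2) := by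
    rw [show (x-π)/2 = x/2 - π/2 by ring, Real.cos_sub_pi_div_two]
  have hθs : Real.sin ((x-π)/2) = -Real.cos (x/2) := by
    rw [show (x-π)/2 = x/2 - π/2 by ring, Real.sin_sub_pi_div_two]
  have harg : (1:ℂ) - (1:ℝ) * Complex.exp (x * Complex.I)
      = ((2 * Real.sin (x/2) : ℝ) : ℂ)
        * (Complex.cos (((x-π)/2 : ℝ) : ℂ) + Complex.sin (((x-π)/2 : ℝ) : ℂ) * Complex.I) := by
    rw [Complex.exp_mul_I, ← Complex.ofReal_cos, ← Complex.ofReal_sin,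
      ← Complex.ofReal_cos, ← Complex.ofReal_sin, hθc, hθs, hcosx, hsinx]
    push_cast
    ring
  have hF1 : F 1 = (π - x)/2 := by
    rw [hF]
    simp only
    rw [Complex.neg_im, Complex.log_im, harg,
      Complex.arg_mul_cos_add_sin_mul_I (by positivity)
        ⟨by linarith, by linarith⟩]
    ring
  rw [hl1, hF1] at hg
  exact hg


theorem stmt14 : ∀ x : ℝ, 3 ≤ x → x ≤ 2 * π - 3 →
    (Tendsto (fun N : ℕ => ∑ n ∈ Finset.Icc 1 N, Real.sin (n * x) / n) atTop (𝓝 ((π - x) / 2))) ∧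
    (Tendsto (fun N : ℕ => ∑ n ∈ Finset.Icc 1 N, Real.sin n * Real.sin (n * x) / n ^ 2) atTop (𝓝 ((π - x) / 2))) ∧
    (Tendsto (fun N : ℕ => ∑ n ∈ Finset.Icc 1 N, Real.sin n ^ 2 * Real.sin (n * x) / n ^ 3) atTop (𝓝 ((π - x) / 2))) ∧
    (Tendsto (fun N : ℕ => ∑ n ∈ Finset.Icc 1 N, Real.sin n ^ 3 * Real.sin (n * x) / n ^ 4) atTop (𝓝 ((π - x) / 2))) := by
  intro x h3 h3'
  refine ⟨?_, ?_, ?_, ?_⟩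
  · exact tendsto_Icc_of_range (by simp) (series1 h3 h3')
  · exact tendsto_Icc_of_hasSum (by simp) (series2 h3 h3')
  · exact tendsto_Icc_of_hasSum (by simp) (series3 h3 h3')
  · exact tendsto_Icc_of_hasSum (by simp) (series4 h3 h3')
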